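/- Let R = R₁ × ⋯ × R_t be a finite product of commutative rings and let 𝔠 ⊆ R[z]^n be an (n,k) family of convolutional codes over R, with restrictions C_j := π_j(𝔠) ⊆ R_j[z]^n (the image of 𝔠 under the componentwise projection R[z]^n → R_j[z]^n, equivalently 𝔠 ⊗_R R_j). Then 𝔠 is observable (i.e. R[z]^n/𝔠 is flat over R[z]) if and only if for every j the code C_j is observable (i.e. R_j[z]^n/C_j is flat over R_j[z]). -/

import Mathlib

open Matrix Polynomial

section Aux

variable {t n : ℕ} (R : Fin t → Type*) [∀ j, CommRing (R j)]

/-- Projection `R[z] → R_j[z]`. -/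
noncomputable def fj (j : Fin t) : Polynomial (∀ i, R i) →+* Polynomial (R j) :=
  Polynomial.mapRingHom (Pi.evalRingHom R j)

/-- The idempotent of the `j`-th factor, as a constant polynomial. -/
noncomputable def ej (j : Fin t) : Polynomial (∀ i, R i) :=
  Polynomial.C (Pi.single j 1)

lemma fj_ej_same (j : Fin t) : fj R j (ej R j) = 1 := by
  simp [fj, ej, Pi.single_eq_same]

lemma fj_ej_ne {i j : Fin t} (h : i ≠ j) : fj R i (ej R j) = 0 := by
  simp [fj, ej, Pi.single_eq_of_ne h]

lemma fj_inj {p : Polynomial (∀ i, R i)} (h : ∀ j, fj R j p = 0) : p = 0 := by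
  apply Polynomial.ext
  intro m
  rw [Polynomial.coeff_zero]
  funext j
  have := congrArg (fun q => Polynomial.coeff q m) (h j)
  simpa [fj, Polynomial.coeff_map] using this

lemma fj_surj (j : Fin t) : Function.Surjective (fj R j) :=
  Polynomial.map_surjective _ (fun y => ⟨Pi.single j y, Pi.single_eq_same j y⟩)

/-- Componentwise projection `(R[z])^n → (R_j[z])^n`. -/
noncomputable def pmapL (n : ℕ) (j : Fin t) :
    (Fin n → Polynomial (∀ i, R i)) → (Fin n → Polynomial (R j)) :=
  fun v l => (v l).map (Pi.evalRingHom R j)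

lemma pmapL_apply (j : Fin t) (v : Fin n → Polynomial (∀ i, R i)) (l : Fin n) :
    pmapL R n j v l = fj R j (v l) := rfl

lemma pmapL_add (j : Fin t) (v w : Fin n → Polynomial (∀ i, R i)) :
    pmapL R n j (v + w) = pmapL R n j v + pmapL R n j w := by
  funext l; simp [pmapL_apply, _root_.map_add]

lemma pmapL_sub (j : Fin t) (v w : Fin n → Polynomial (∀ i, R i)) :
    pmapL R n j (v - w) = pmapL R n j v - pmapL R n j w := by
  funext l; simp [pmapL_apply, _root_.map_sub]

lemma pmapL_zero (j : Fin t) : pmapL R n j (0 : Fin n → Polynomial (∀ i, R i)) = 0 := by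
  funext l; simp [pmapL_apply, _root_.map_zero]

lemma pmapL_smul (j : Fin t) (s : Polynomial (∀ i, R i))
    (v : Fin n → Polynomial (∀ i, R i)) :
    pmapL R n j (s • v) = fj R j s • pmapL R n j v := by
  funext l
  simp [pmapL_apply, Pi.smul_apply, smul_eq_mul, _root_.map_mul]

lemma pmapL_sum (j : Fin t) {ι : Type*} (s : Finset ι)
    (g : ι → (Fin n → Polynomial (∀ i, R i))) :
    pmapL R n j (∑ x ∈ s, g x) = ∑ x ∈ s, pmapL R n j (g x) := by
  funext l
  show fj R j ((∑ x ∈ s, g x) l) = (∑ x ∈ s, pmapL R n j (g x)) l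
  rw [Finset.sum_apply, Finset.sum_apply, _root_.map_sum]
  rfl

lemma pmapL_surj (j : Fin t) : Function.Surjective (pmapL R n j) := by
  intro w
  choose v hv using fun l => fj_surj R j (w l)
  exact ⟨v, funext hv⟩

lemma pmapL_inj {v : Fin n → Polynomial (∀ i, R i)}
    (h : ∀ j, pmapL R n j v = 0) : v = 0 := by
  funext l
  apply fj_inj
  intro j
  exact congrFun (h j) l

end Aux

section Main

variable {t n : ℕ} (R : Fin t → Type*) [∀ j, CommRing (R j)]
variable (𝔠 : Submodule (Polynomial (∀ j, R j)) (Fin n → Polynomial (∀ j, R j)))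

/-- The restricted code. -/
noncomputable def Cj (j : Fin t) : Submodule (Polynomial (R j)) (Fin n → Polynomial (R j)) :=
  Submodule.span (Polynomial (R j))
    ((fun v : Fin n → Polynomial (∀ i, R i) =>
      fun l => (v l).map (Pi.evalRingHom R j)) '' (𝔠 : Set _))

lemma mem_Cj {j : Fin t} {w : Fin n → Polynomial (R j)} :
    w ∈ Cj R 𝔠 j ↔ ∃ v ∈ 𝔠, pmapL R n j v = w := by
  constructor
  · intro hw
    induction hw using Submodule.span_induction with
    | mem x hx =>
        obtain ⟨v, hv, rfl⟩ := hx
        exact ⟨v, hv, rfl⟩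
    | zero => exact ⟨0, 𝔠.zero_mem, pmapL_zero R _⟩
    | add x y hx hy ihx ihy =>
        obtain ⟨v, hv, rfl⟩ := ihx
        obtain ⟨u, hu, rfl⟩ := ihy
        exact ⟨v + u, 𝔠.add_mem hv hu, pmapL_add R _ _ _⟩
    | smul a x hx ihx =>
        obtain ⟨v, hv, rfl⟩ := ihx
        obtain ⟨s, rfl⟩ := fj_surj R j a
        exact ⟨s • v, 𝔠.smul_mem s hv, pmapL_smul R _ _ _⟩
  · rintro ⟨v, hv, rfl⟩
    exact Submodule.subset_span ⟨v, hv, rfl⟩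

/-- The quotient module of the `j`-th restricted code. -/
noncomputable abbrev Mj (j : Fin t) := (Fin n → Polynomial (R j)) ⧸ Cj R 𝔠 j

end Main

set_option maxHeartbeats 2000000 in
theorem observable_iff_components {t n k : ℕ} (R : Fin t → Type*)
    [∀ j, CommRing (R j)]
    (𝔠 : Submodule (Polynomial (∀ j, R j)) (Fin n → Polynomial (∀ j, R j)))
    (hfree : Nonempty (Module.Basis (Fin k) (Polynomial (∀ j, R j)) 𝔠))
    (hflat : Module.Flat (∀ j, R j) ((Fin n → Polynomial (∀ j, R j)) ⧸ 𝔠)) :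
    Module.Flat (Polynomial (∀ j, R j)) ((Fin n → Polynomial (∀ j, R j)) ⧸ 𝔠) ↔
      ∀ j : Fin t, Module.Flat (Polynomial (R j))
        ((Fin n → Polynomial (R j)) ⧸
          Submodule.span (Polynomial (R j))
            ((fun v : Fin n → Polynomial (∀ i, R i) =>
              fun l => (v l).map (Pi.evalRingHom R j)) '' (𝔠 : Set _))) := by
  classical
  set S := Polynomial (∀ j, R j) with hS
  -- S-module structures on each `Mj` via `fj`
  letI modS : ∀ j : Fin t, Module S (Mj R 𝔠 j) :=
    fun j => Module.compHom _ (fj R j)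
  have smul_mk : ∀ (j : Fin t) (s : S) (w : Fin n → Polynomial (R j)),
      s • (Submodule.Quotient.mk w : Mj R 𝔠 j)
        = Submodule.Quotient.mk (fj R j s • w) :=
    fun j s w => (Submodule.Quotient.mk_smul (Cj R 𝔠 j) (fj R j s) w).symm
  -- the S-linear maps `(Fin n → S) →ₗ[S] Mj`
  letI Φ0 : ∀ j : Fin t, (Fin n → S) →ₗ[S] Mj R 𝔠 j := fun j =>
    { toFun := fun v => Submodule.Quotient.mk (pmapL R n j v)
      map_add' := fun v w => by
        show Submodule.Quotient.mk (pmapL R n j (v + w))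
          = (Submodule.Quotient.mk (pmapL R n j v) : Mj R 𝔠 j)
            + Submodule.Quotient.mk (pmapL R n j w)
        rw [pmapL_add]
        exact Submodule.Quotient.mk_add _
      map_smul' := fun s v => by
        show Submodule.Quotient.mk (pmapL R n j (s • v))
          = RingHom.id S s • (Submodule.Quotient.mk (pmapL R n j v) : Mj R 𝔠 j)
        rw [pmapL_smul, RingHom.id_apply, smul_mk] }
  have Φ0_apply : ∀ (j : Fin t) (v), Φ0 j v = Submodule.Quotient.mk (pmapL R n j v) :=
    fun _ _ => rfl
  have hker : ∀ j : Fin t, 𝔠 ≤ LinearMap.ker (Φ0 j) := by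
    intro j v hv
    rw [LinearMap.mem_ker, Φ0_apply, Submodule.Quotient.mk_eq_zero]
    exact (mem_Cj R 𝔠).2 ⟨v, hv, rfl⟩
  letI Φ : ∀ j : Fin t,
      ((Fin n → S) ⧸ 𝔠) →ₗ[S] Mj R 𝔠 j := fun j => 𝔠.liftQ (Φ0 j) (hker j)
  have Φ_mk : ∀ (j : Fin t) (v : Fin n → S),
      Φ j (Submodule.Quotient.mk v) = Submodule.Quotient.mk (pmapL R n j v) :=
    fun _ _ => rfl
  have Φ_surj : ∀ j : Fin t, Function.Surjective (Φ j) := by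
    intro j m
    obtain ⟨w, rfl⟩ := Submodule.Quotient.mk_surjective _ m
    obtain ⟨v, rfl⟩ := pmapL_surj R j w
    exact ⟨Submodule.Quotient.mk v, rfl⟩
  -- algebra structures
  letI algS : ∀ j : Fin t, Algebra S (Polynomial (R j)) := fun j => (fj R j).toAlgebra
  haveI towerS : ∀ j : Fin t, IsScalarTower S (Polynomial (R j)) (Mj R 𝔠 j) := by
    intro j
    refine IsScalarTower.of_algebraMap_smul ?_
    intro s m
    rfl
  -- each `Polynomial (R j)` is the localization of `S` at the powers of `ej`
  haveI hloc : ∀ j : Fin t,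
      IsLocalization (Submonoid.powers (ej R j)) (Polynomial (R j)) := by
    intro j
    constructor
    constructor
    · rintro ⟨x, hx⟩
      obtain ⟨m, rfl⟩ := (Submonoid.mem_powers_iff _ _).mp hx
      show IsUnit (fj R j (ej R j ^ m))
      rw [_root_.map_pow, fj_ej_same, one_pow]
      exact isUnit_one
    · intro z
      obtain ⟨s, rfl⟩ := fj_surj R j z
      refine ⟨⟨s, 1⟩, ?_⟩
      show fj R j s * fj R j 1 = fj R j s
      rw [_root_.map_one, mul_one]
    · intro x y hxy
      have hxy' : fj R j x = fj R j y := hxy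
      refine ⟨⟨ej R j, Submonoid.mem_powers _⟩, ?_⟩
      show ej R j * x = ej R j * y
      have h0 : ej R j * (x - y) = 0 := by
        apply fj_inj
        intro i
        rcases eq_or_ne i j with rfl | hne
        · rw [_root_.map_mul, fj_ej_same, one_mul, _root_.map_sub, hxy', sub_self]
        · rw [_root_.map_mul, fj_ej_ne R hne, zero_mul]
      rw [mul_sub] at h0
      exact sub_eq_zero.mp h0
  -- `Mj` is the localized module
  haveI hlocM : ∀ j : Fin t, IsLocalizedModule (Submonoid.powers (ej R j)) (Φ j) := by
    intro j
    constructor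
    · rintro ⟨x, hx⟩
      obtain ⟨m, rfl⟩ := (Submonoid.mem_powers_iff _ _).mp hx
      have h1 : (algebraMap S (Module.End S (Mj R 𝔠 j))) (ej R j ^ m) = 1 := by
        apply LinearMap.ext
        intro y
        obtain ⟨w, rfl⟩ := Submodule.Quotient.mk_surjective _ y
        rw [Module.algebraMap_end_apply, smul_mk, _root_.map_pow, fj_ej_same, one_pow,
          one_smul, Module.End.one_apply]
      show IsUnit ((algebraMap S (Module.End S (Mj R 𝔠 j))) (ej R j ^ m))
      rw [h1]
      exact isUnit_one
    · intro y
      obtain ⟨m, rfl⟩ := Φ_surj j y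
      exact ⟨⟨m, 1⟩, one_smul _ _⟩
    · intro x₁ x₂ hx
      obtain ⟨v₁, rfl⟩ := Submodule.Quotient.mk_surjective _ x₁
      obtain ⟨v₂, rfl⟩ := Submodule.Quotient.mk_surjective _ x₂
      have hx' : pmapL R n j v₁ - pmapL R n j v₂ ∈ Cj R 𝔠 j := by
        rw [← Submodule.Quotient.eq]
        exact hx
      obtain ⟨c, hc, hcp⟩ := (mem_Cj R 𝔠).mp hx'
      refine ⟨⟨ej R j, Submonoid.mem_powers _⟩, ?_⟩
      have hd : ej R j • (v₁ - v₂ - c) = (0 : Fin n → S) := by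
        apply pmapL_inj
        intro i
        rw [pmapL_smul]
        rcases eq_or_ne i j with rfl | hne
        · rw [fj_ej_same, one_smul, pmapL_sub, pmapL_sub, hcp, sub_self]
        · rw [fj_ej_ne R hne, zero_smul]
      have h3 : ej R j • v₁ - ej R j • v₂ = ej R j • c := by
        have h := hd
        simp only [smul_sub] at h
        exact sub_eq_zero.mp h
      show (ej R j : S) • (Submodule.Quotient.mk v₁ : (Fin n → S) ⧸ 𝔠)
          = (ej R j : S) • Submodule.Quotient.mk v₂
      rw [← Submodule.Quotient.mk_smul, ← Submodule.Quotient.mk_smul,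
        Submodule.Quotient.eq]
      rw [h3]
      exact 𝔠.smul_mem _ hc
  constructor
  · -- observable implies each component observable
    intro hM j
    haveI := hM
    have : Module.Flat (Polynomial (R j)) (Mj R 𝔠 j) :=
      Module.Flat.of_isLocalizedModule (Polynomial (R j)) (Submonoid.powers (ej R j)) (Φ j)
    exact this
  · -- each component observable implies observable
    intro hj
    letI Φfull : (Fin n → S) →ₗ[S] (∀ j, Mj R 𝔠 j) := LinearMap.pi Φ0
    have Φfull_apply : ∀ (v : Fin n → S) (j : Fin t), Φfull v j = Φ0 j v :=
      fun _ _ => rfl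
    have hkerfull : LinearMap.ker Φfull = 𝔠 := by
      apply le_antisymm
      · intro v hv
        rw [LinearMap.mem_ker] at hv
        have hcomp : ∀ j, pmapL R n j v ∈ Cj R 𝔠 j := by
          intro j
          rw [← Submodule.Quotient.mk_eq_zero]
          have h := congrFun hv j
          exact h
        choose c hc hcp using fun j => (mem_Cj R 𝔠).mp (hcomp j)
        have hdz : v - ∑ j, ej R j • c j = 0 := by
          apply pmapL_inj
          intro i
          rw [pmapL_sub, pmapL_sum]
          have hsum : ∑ j', pmapL R n i (ej R j' • c j') = pmapL R n i v := by
            rw [Finset.sum_eq_single i]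
            · rw [pmapL_smul, fj_ej_same, one_smul, hcp]
            · intro b _ hb
              rw [pmapL_smul, fj_ej_ne R (Ne.symm hb), zero_smul]
            · intro h; exact absurd (Finset.mem_univ i) h
          rw [hsum, sub_self]
        have hveq : v = ∑ j, ej R j • c j := by
          have := sub_eq_zero.mp hdz
          exact this
        rw [hveq]
        exact Submodule.sum_mem _ (fun j _ => 𝔠.smul_mem _ (hc j))
      · intro v hv
        rw [LinearMap.mem_ker]
        funext j
        exact hker j hv
    have hsurjfull : Function.Surjective Φfull := by
      intro m
      choose w hw using fun j => Submodule.Quotient.mk_surjective _ (m j)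
      choose v hv using fun j => pmapL_surj R j (w j)
      refine ⟨∑ j, ej R j • v j, ?_⟩
      funext i
      rw [Φfull_apply, Φ0_apply, pmapL_sum]
      have hsum : ∑ j, pmapL R n i (ej R j • v j) = pmapL R n i (v i) := by
        rw [Finset.sum_eq_single i]
        · rw [pmapL_smul, fj_ej_same, one_smul]
        · intro b _ hb
          rw [pmapL_smul, fj_ej_ne R (Ne.symm hb), zero_smul]
        · intro h; exact absurd (Finset.mem_univ i) h
      rw [hsum, hv, hw]
    letI eqv : ((Fin n → S) ⧸ 𝔠) ≃ₗ[S] (∀ j, Mj R 𝔠 j) :=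
      (Submodule.quotEquivOfEq _ _ hkerfull.symm).trans
        (Φfull.quotKerEquivOfSurjective hsurjfull)
    haveI flatT : ∀ j : Fin t, Module.Flat S (Polynomial (R j)) := fun j =>
      IsLocalization.flat _ (Submonoid.powers (ej R j))
    haveI flatMj : ∀ j : Fin t, Module.Flat S (Mj R 𝔠 j) := by
      intro j
      haveI : Module.Flat (Polynomial (R j)) (Mj R 𝔠 j) := hj j
      exact Module.Flat.trans S (Polynomial (R j)) (Mj R 𝔠 j)
    haveI flatPi : Module.Flat S (∀ j, Mj R 𝔠 j) :=
      Module.Flat.of_linearEquiv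
        (DirectSum.linearEquivFunOnFintype S (Fin t) (fun j => Mj R 𝔠 j)).symm
    exact Module.Flat.of_linearEquiv eqv
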